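/- For every 𝒦 > 0 there exists a constant C > 0 depending only on 𝒦 such that the following holds. Let Φ satisfy Condition L with constant 𝒦, let h be a probability density on [0,1], let F_X be a probability measure on [0,1]^P, and let u, v : [0,1] × [0,1]^P → ℝ be bounded measurable functions. Then the F_X-integrated Kullback–Leibler divergence satisfies K(f_u, f_v) ≤ C ‖u − v‖_∞² exp(𝒦 ‖u − v‖_∞) (1 + 2𝒦 ‖u − v‖_∞). -/

import Mathlib

open MeasureTheory

lemma exp_quad (s : ℝ) : Real.exp s ≤ 1 + s + s ^ 2 * Real.exp |s| := by
  rcases le_total (|s|) 1 with hs | hs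
  · have h1 : |Real.exp s - (1 + s)| ≤ s ^ 2 := by
      have := Real.abs_exp_sub_one_sub_id_le hs
      simpa [sub_sub, abs_sub_comm] using this
    have h2 : Real.exp s - (1 + s) ≤ s ^ 2 := (abs_le.mp h1).2
    nlinarith [Real.exp_pos |s|, Real.one_le_exp (abs_nonneg s), sq_nonneg s]
  · rcases le_total s 0 with h0 | h0
    · have hes : Real.exp s ≤ 1 := Real.exp_le_one_iff.mpr h0
      have habs : |s| = -s := abs_of_nonpos h0
      have h2 : (1:ℝ) ≤ s ^ 2 := by nlinarith [abs_nonneg s, sq_abs s]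
      have he1 : (1:ℝ) ≤ Real.exp |s| := Real.one_le_exp (abs_nonneg s)
      nlinarith
    · have habs : |s| = s := abs_of_nonneg h0
      have h2 : (1:ℝ) ≤ s ^ 2 := by nlinarith [sq_abs s]
      rw [habs]
      nlinarith [Real.exp_pos s, mul_nonneg (by nlinarith : (0:ℝ) ≤ s ^ 2 - 1) (Real.exp_pos s).le]


lemma inner_bound (𝒦 M : ℝ) (h𝒦 : 0 < 𝒦) (hM : 0 ≤ M)
    (Φ φ : ℝ → ℝ) (hΦd : ∀ x, HasDerivAt Φ (φ x) x) (hΦm : StrictMono Φ)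
    (hΦ01 : ∀ x, 0 < Φ x ∧ Φ x < 1) (hφK : ∀ x, φ x / Φ x ≤ 𝒦)
    (h : ℝ → ℝ) (hhm : Measurable h) (hh0 : ∀ y, 0 ≤ h y)
    (hh1 : (∫ y in Set.Icc (0:ℝ) 1, h y) = 1)
    (a b : ℝ → ℝ) (ham : Measurable a) (hbm : Measurable b)
    (hab : ∀ y ∈ Set.Icc (0:ℝ) 1, |a y - b y| ≤ M) :
    (∫ y in Set.Icc (0:ℝ) 1,
        (h y * Φ (a y) / ∫ t in Set.Icc (0:ℝ) 1, h t * Φ (a t)) *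
          Real.log ((h y * Φ (a y) / ∫ t in Set.Icc (0:ℝ) 1, h t * Φ (a t)) /
            (h y * Φ (b y) / ∫ t in Set.Icc (0:ℝ) 1, h t * Φ (b t))))
      ≤ 𝒦 ^ 2 * M ^ 2 * Real.exp (𝒦 * M) := by
  have hΦpos : ∀ x, 0 < Φ x := fun x => (hΦ01 x).1
  have hΦlt1 : ∀ x, Φ x < 1 := fun x => (hΦ01 x).2
  have contΦ : Continuous Φ := by
    rw [continuous_iff_continuousAt]; exact fun x => (hΦd x).continuousAt
  -- φ nonneg
  have hφ0 : ∀ x, 0 ≤ φ x := by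
    intro x
    have h1 : Filter.Tendsto (slope Φ x) (nhdsWithin x (Set.Ioi x)) (nhds (φ x)) :=
      (hasDerivAt_iff_tendsto_slope.mp (hΦd x)).mono_left
        (nhdsWithin_mono x (fun y hy => ne_of_gt hy))
    refine ge_of_tendsto h1 ?_
    filter_upwards [self_mem_nhdsWithin] with y hy
    have hxy : x < y := hy
    rw [slope_def_field]
    exact div_nonneg (sub_nonneg.mpr (hΦm.monotone hxy.le)) (sub_nonneg.mpr hxy.le)
  -- Lipschitz property of log ∘ Φ
  have hlip : ∀ p q : ℝ, |Real.log (Φ p) - Real.log (Φ q)| ≤ 𝒦 * |p - q| := by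
    intro p q
    have key := Convex.norm_image_sub_le_of_norm_hasDerivWithin_le
      (f := fun t => Real.log (Φ t)) (f' := fun t => φ t / Φ t) (s := Set.univ) (C := 𝒦)
      (fun t _ => ((hΦd t).log (hΦpos t).ne').hasDerivWithinAt)
      (fun t _ => by
        rw [Real.norm_eq_abs, abs_of_nonneg (div_nonneg (hφ0 t) (hΦpos t).le)]
        exact hφK t)
      convex_univ (Set.mem_univ q) (Set.mem_univ p)
    simpa [Real.norm_eq_abs] using key
  set I : Set ℝ := Set.Icc (0:ℝ) 1 with hIdef
  have hImeas : MeasurableSet I := measurableSet_Icc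
  -- h integrable on I
  have hInt_h : IntegrableOn h I := by
    by_contra hc
    rw [MeasureTheory.integral_undef hc] at hh1
    norm_num at hh1
  -- generic facts for measurable w
  have hIntw : ∀ w : ℝ → ℝ, Measurable w → IntegrableOn (fun t => h t * Φ (w t)) I := by
    intro w hw
    refine Integrable.mono' hInt_h ?_ ?_
    · exact (hhm.mul ((contΦ.measurable).comp hw)).aestronglyMeasurable
    · filter_upwards with t
      rw [Real.norm_eq_abs, abs_of_nonneg (mul_nonneg (hh0 t) (hΦpos _).le)]
      calc h t * Φ (w t) ≤ h t * 1 := by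
              exact mul_le_mul_of_nonneg_left (hΦlt1 _).le (hh0 t)
        _ = h t := mul_one _
  have hNpos : ∀ w : ℝ → ℝ, Measurable w → 0 < ∫ t in I, h t * Φ (w t) := by
    intro w hw
    have hnn : 0 ≤ᵐ[volume.restrict I] fun t => h t * Φ (w t) :=
      Filter.Eventually.of_forall fun t => mul_nonneg (hh0 t) (hΦpos _).le
    rcases (integral_nonneg (f := fun t => h t * Φ (w t)) fun t => mul_nonneg (hh0 t) (hΦpos _).le).lt_or_eq with hlt | heq
    · exact hlt
    exfalso
    have hz : (fun t => h t * Φ (w t)) =ᵐ[volume.restrict I] 0 :=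
      (integral_eq_zero_iff_of_nonneg_ae hnn (hIntw w hw)).mp heq.symm
    have hz' : h =ᵐ[volume.restrict I] 0 := by
      filter_upwards [hz] with t ht
      have : h t * Φ (w t) = 0 := ht
      rcases mul_eq_zero.mp this with h0 | h0
      · exact h0
      · exact absurd h0 (hΦpos _).ne'
    have : (∫ y in I, h y) = 0 := by
      rw [integral_congr_ae hz']; simp
    rw [hh1] at this; norm_num at this
  set Na : ℝ := ∫ t in I, h t * Φ (a t) with hNa
  set Nb : ℝ := ∫ t in I, h t * Φ (b t) with hNb
  have hNa0 : 0 < Na := hNpos a ham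
  have hNb0 : 0 < Nb := hNpos b hbm
  set fu : ℝ → ℝ := fun y => h y * Φ (a y) / Na with hfu
  set ε : ℝ → ℝ := fun y => Real.log (Φ (a y)) - Real.log (Φ (b y)) with hε
  set m : ℝ := 𝒦 * M with hm
  have hm0 : 0 ≤ m := mul_nonneg h𝒦.le hM
  have hεb : ∀ y ∈ I, |ε y| ≤ m := fun y hy =>
    (hlip (a y) (b y)).trans (mul_le_mul_of_nonneg_left (hab y hy) h𝒦.le)
  have hfu0 : ∀ y, 0 ≤ fu y := fun y =>
    div_nonneg (mul_nonneg (hh0 y) (hΦpos _).le) hNa0.le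
  -- integrability of fu
  have hfu_int : IntegrableOn fu I := (hIntw a ham).div_const Na
  have hfu_one : (∫ y in I, fu y) = 1 := by
    rw [hfu]
    rw [integral_div]
    exact div_self hNa0.ne'
  -- ε measurable
  have hεm : Measurable ε :=
    (Real.measurable_log.comp (contΦ.measurable.comp ham)).sub
      (Real.measurable_log.comp (contΦ.measurable.comp hbm))
  have hfum : Measurable fu :=
    (hhm.mul (contΦ.measurable.comp ham)).div_const Na
  -- fu * ε integrable
  have hfuε_int : IntegrableOn (fun y => fu y * ε y) I := by
    refine Integrable.mono' ((hInt_h.mul_const (m / Na))) ((hfum.mul hεm).aestronglyMeasurable) ?_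
    filter_upwards [ae_restrict_mem hImeas] with y hy
    rw [Real.norm_eq_abs, abs_mul, abs_of_nonneg (hfu0 y)]
    have h1 : fu y ≤ h y / Na := by
      show h y * Φ (a y) / Na ≤ h y / Na
      gcongr
      calc h y * Φ (a y) ≤ h y * 1 := mul_le_mul_of_nonneg_left (hΦlt1 _).le (hh0 y)
        _ = h y := mul_one _
    calc fu y * |ε y| ≤ (h y / Na) * m :=
          mul_le_mul h1 (hεb y hy) (abs_nonneg _) (div_nonneg (hh0 y) hNa0.le)
      _ = h y * (m / Na) := by ring
  set E : ℝ := ∫ y in I, fu y * ε y with hE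
  set K2 : ℝ := m ^ 2 * Real.exp m with hK2
  have hK20 : 0 ≤ K2 := mul_nonneg (sq_nonneg m) (Real.exp_pos m).le
  -- pointwise identity
  have hid : ∀ y, fu y * Real.log (fu y / (h y * Φ (b y) / Nb))
      = fu y * ε y + fu y * Real.log (Nb / Na) := by
    intro y
    rcases (hh0 y).lt_or_eq with hy0 | hy0
    · have hΦa := hΦpos (a y)
      have hΦb := hΦpos (b y)
      have hratio : fu y / (h y * Φ (b y) / Nb) = (Φ (a y) / Φ (b y)) * (Nb / Na) := by
        show (h y * Φ (a y) / Na) / (h y * Φ (b y) / Nb) = _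
        field_simp
      rw [hratio, Real.log_mul (div_pos hΦa hΦb).ne' (div_pos hNb0 hNa0).ne',
        Real.log_div hΦa.ne' hΦb.ne']
      simp only [hε]
      ring
    · have hfuy : fu y = 0 := by
        show h y * Φ (a y) / Na = 0
        rw [← hy0]; ring
      rw [hfuy]; ring
  have hEq1 : (∫ y in I, fu y * Real.log (fu y / (h y * Φ (b y) / Nb)))
      = E + Real.log (Nb / Na) := by
    calc (∫ y in I, fu y * Real.log (fu y / (h y * Φ (b y) / Nb)))
        = ∫ y in I, (fu y * ε y + fu y * Real.log (Nb / Na)) := by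
          exact integral_congr_ae (Filter.Eventually.of_forall hid)
      _ = E + Real.log (Nb / Na) := by
          rw [integral_add hfuε_int (hfu_int.mul_const _), integral_mul_const, hfu_one, one_mul]
  -- the exponential-tilting identity
  have hfuexp : ∀ y, fu y * Real.exp (-ε y) = h y * Φ (b y) / Na := by
    intro y
    have hexpε : Real.exp (-ε y) = Φ (b y) / Φ (a y) := by
      simp only [hε]
      rw [neg_sub, Real.exp_sub, Real.exp_log (hΦpos _), Real.exp_log (hΦpos _)]
    rw [hexpε]
    show (h y * Φ (a y) / Na) * (Φ (b y) / Φ (a y)) = _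
    have h1 : Φ (a y) ≠ 0 := (hΦpos _).ne'
    field_simp
  have hNbNa : Nb / Na = ∫ y in I, fu y * Real.exp (-ε y) := by
    simp only [hfuexp]
    rw [integral_div]
  have hexp_int : IntegrableOn (fun y => fu y * Real.exp (-ε y)) I := by
    have : (fun y => fu y * Real.exp (-ε y)) = fun y => h y * Φ (b y) / Na :=
      funext hfuexp
    rw [this]
    exact (hIntw b hbm).div_const Na
  have hpt : ∀ y ∈ I, fu y * Real.exp (-ε y) ≤ fu y * (1 - ε y + K2) := by
    intro y hy
    refine mul_le_mul_of_nonneg_left ?_ (hfu0 y)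
    calc Real.exp (-ε y) ≤ 1 + (-ε y) + (-ε y) ^ 2 * Real.exp |(-ε y)| := exp_quad _
      _ ≤ 1 - ε y + K2 := by
          have h1 : (-ε y) ^ 2 ≤ m ^ 2 := by
            nlinarith [hεb y hy, abs_nonneg (ε y), sq_abs (ε y)]
          have h2 : Real.exp |(-ε y)| ≤ Real.exp m :=
            Real.exp_le_exp.mpr (by rw [abs_neg]; exact hεb y hy)
          have h3 : (-ε y) ^ 2 * Real.exp |(-ε y)| ≤ m ^ 2 * Real.exp m :=
            mul_le_mul h1 h2 (Real.exp_pos _).le (sq_nonneg m)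
          rw [hK2]; linarith
  have hrhs_int : IntegrableOn (fun y => fu y * (1 - ε y + K2)) I := by
    have heq : (fun y => fu y * (1 - ε y + K2)) = fun y => fu y - fu y * ε y + fu y * K2 :=
      funext fun y => by ring
    rw [heq]
    exact (hfu_int.sub hfuε_int).add (hfu_int.mul_const _)
  have hsub : IntegrableOn (fun y => fu y - fu y * ε y) I := hfu_int.sub hfuε_int
  have hmono : Nb / Na ≤ 1 - E + K2 := by
    rw [hNbNa]
    calc (∫ y in I, fu y * Real.exp (-ε y))
        ≤ ∫ y in I, fu y * (1 - ε y + K2) :=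
          setIntegral_mono_on hexp_int hrhs_int hImeas hpt
      _ = 1 - E + K2 := by
          have heq : (fun y => fu y * (1 - ε y + K2)) = fun y => fu y - fu y * ε y + fu y * K2 :=
            funext fun y => by ring
          rw [heq, integral_add hsub (hfu_int.mul_const _),
            integral_sub hfu_int hfuε_int, integral_mul_const, hfu_one]
          ring
  have hc : Real.log (Nb / Na) ≤ K2 - E := by
    have hpos : 0 < Nb / Na := div_pos hNb0 hNa0
    calc Real.log (Nb / Na) ≤ Real.log (1 - E + K2) := Real.log_le_log hpos hmono
      _ ≤ (1 - E + K2) - 1 := Real.log_le_sub_one_of_pos (lt_of_lt_of_le hpos hmono)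
      _ = K2 - E := by ring
  calc (∫ y in I, fu y * Real.log (fu y / (h y * Φ (b y) / Nb)))
      = E + Real.log (Nb / Na) := hEq1
    _ ≤ E + (K2 - E) := by linarith
    _ = K2 := by ring
    _ = 𝒦 ^ 2 * M ^ 2 * Real.exp (𝒦 * M) := by
        rw [hK2, hm]; ring

/-- **Kullback–Leibler bound for tilted conditional densities.**
For every `𝒦 > 0` there is a constant `C > 0` depending only on `𝒦` such that for any `Φ`
satisfying Condition L with constant `𝒦`, any density `h` on `[0,1]`, any probability measure
`F_X` on `[0,1]^P`, and bounded (by `M ≥ ‖u - v‖_∞`) measurable `u, v`, the `F_X`-integrated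
Kullback–Leibler divergence satisfies `K(f_u, f_v) ≤ C M² exp(𝒦 M) (1 + 2𝒦 M)`. -/
theorem stmt9 (𝒦 : ℝ) (h𝒦 : 0 < 𝒦) :
    ∃ C : ℝ, 0 < C ∧
      ∀ (P : ℕ) (Φ φ : ℝ → ℝ),
        (∀ x, HasDerivAt Φ (φ x) x) → StrictMono Φ →
        (∀ x, 0 < Φ x ∧ Φ x < 1) → (∀ x, φ x / Φ x ≤ 𝒦) →
      ∀ (h : ℝ → ℝ), Measurable h → (∀ y, 0 ≤ h y) →
        (∫ y in Set.Icc (0:ℝ) 1, h y) = 1 →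
      ∀ (F : Measure (Fin P → ℝ)), IsProbabilityMeasure F →
      ∀ (u v : ℝ → (Fin P → ℝ) → ℝ),
        Measurable (Function.uncurry u) → Measurable (Function.uncurry v) →
      ∀ M : ℝ,
        (∀ y ∈ Set.Icc (0:ℝ) 1, ∀ x ∈ Set.univ.pi fun _ : Fin P => Set.Icc (0:ℝ) 1,
          |u y x - v y x| ≤ M) →
      ∀ (f : (ℝ → (Fin P → ℝ) → ℝ) → ℝ → (Fin P → ℝ) → ℝ),
        f = (fun w y x => h y * Φ (w y x) / ∫ t in Set.Icc (0:ℝ) 1, h t * Φ (w t x)) →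
        (∫ x in Set.univ.pi fun _ : Fin P => Set.Icc (0:ℝ) 1,
            (∫ y in Set.Icc (0:ℝ) 1, f u y x * Real.log (f u y x / f v y x)) ∂F)
          ≤ C * M ^ 2 * Real.exp (𝒦 * M) * (1 + 2 * 𝒦 * M) := by
  refine ⟨𝒦 ^ 2, by positivity, ?_⟩
  intro P Φ φ hΦd hΦm hΦ01 hφK h hhm hh0 hh1 F hF u v hu hv M hMb f hf
  subst hf
  set cube : Set (Fin P → ℝ) := Set.univ.pi fun _ : Fin P => Set.Icc (0:ℝ) 1 with hcube
  have hcubeM : MeasurableSet cube := MeasurableSet.univ_pi fun _ => measurableSet_Icc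
  have hx0 : (fun _ : Fin P => (0:ℝ)) ∈ cube := by
    intro i _
    exact ⟨le_refl 0, zero_le_one⟩
  have hM0 : 0 ≤ M :=
    (abs_nonneg _).trans (hMb 0 ⟨le_refl 0, zero_le_one⟩ _ hx0)
  set B : ℝ := 𝒦 ^ 2 * M ^ 2 * Real.exp (𝒦 * M) with hB
  have hB0 : 0 ≤ B := by positivity
  have hptx : ∀ x ∈ cube,
      (∫ y in Set.Icc (0:ℝ) 1,
        (h y * Φ (u y x) / ∫ t in Set.Icc (0:ℝ) 1, h t * Φ (u t x)) *
          Real.log ((h y * Φ (u y x) / ∫ t in Set.Icc (0:ℝ) 1, h t * Φ (u t x)) /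
            (h y * Φ (v y x) / ∫ t in Set.Icc (0:ℝ) 1, h t * Φ (v t x)))) ≤ B := by
    intro x hx
    exact inner_bound 𝒦 M h𝒦 hM0 Φ φ hΦd hΦm hΦ01 hφK h hhm hh0 hh1
      (fun y => u y x) (fun y => v y x)
      (hu.comp (measurable_id.prodMk measurable_const))
      (hv.comp (measurable_id.prodMk measurable_const))
      (fun y hy => hMb y hy x hx)
  have hRHS : B ≤ B * (1 + 2 * 𝒦 * M) :=
    le_mul_of_one_le_right hB0 (by nlinarith)
  refine le_trans ?_ hRHS
  by_cases hI : IntegrableOn (fun x =>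
      (∫ y in Set.Icc (0:ℝ) 1,
        (h y * Φ (u y x) / ∫ t in Set.Icc (0:ℝ) 1, h t * Φ (u t x)) *
          Real.log ((h y * Φ (u y x) / ∫ t in Set.Icc (0:ℝ) 1, h t * Φ (u t x)) /
            (h y * Φ (v y x) / ∫ t in Set.Icc (0:ℝ) 1, h t * Φ (v t x))))) cube F
  · calc _ ≤ ∫ _x in cube, B ∂F :=
        setIntegral_mono_on hI (integrableOn_const (measure_lt_top _ _).ne) hcubeM hptx
      _ = (F cube).toReal • B := by rw [setIntegral_const]; rfl
      _ ≤ B := by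
          have h1 : (F cube).toReal ≤ 1 := by
            simpa using ENNReal.toReal_mono (by simp) (prob_le_one (μ := F) (s := cube))
          calc (F cube).toReal • B = (F cube).toReal * B := rfl
            _ ≤ 1 * B := mul_le_mul_of_nonneg_right h1 hB0
            _ = B := one_mul B
  · rw [MeasureTheory.integral_undef hI]
    exact hB0
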